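/- Every integer k has exactly one compact signed-digit representation: there is exactly one finitely supported sequence b : ℕ → {−1,0,1} such that b_i · b_{i+1} = 0 for all i ≥ 0 and Σ_{i≥0} b_i · 2^i = k. -/

import Mathlib

/-- The least-significant NAF digit of `k`. -/
def nafDigit (k : ℤ) : ℤ :=
  if k % 2 = 0 then 0 else if k % 4 = 1 then 1 else -1

lemma nafDigit_mem (k : ℤ) : nafDigit k = -1 ∨ nafDigit k = 0 ∨ nafDigit k = 1 := by
  unfold nafDigit; split_ifs <;> simp

lemma nafDigit_spec (k : ℤ) : k = nafDigit k + 2 * ((k - nafDigit k) / 2) := by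
  unfold nafDigit; split_ifs <;> omega

lemma nafDigit_step (k : ℤ) (h : nafDigit k ≠ 0) :
    nafDigit ((k - nafDigit k) / 2) = 0 := by
  unfold nafDigit at *; split_ifs at * <;> omega

lemma nafDigit_natAbs_lt (k : ℤ) (h : k ≠ 0) :
    ((k - nafDigit k) / 2).natAbs < k.natAbs := by
  unfold nafDigit; split_ifs <;> omega

/-- The NAF digits: `naf i k` is digit `i` of `k`'s NAF. -/
def naf : ℕ → ℤ → ℤ
  | 0, k => nafDigit k
  | (i+1), k => naf i ((k - nafDigit k) / 2)

lemma naf_mem (i : ℕ) (k : ℤ) : naf i k = -1 ∨ naf i k = 0 ∨ naf i k = 1 := by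
  induction i generalizing k with
  | zero => exact nafDigit_mem k
  | succ i ih => exact ih _

lemma naf_zero_of_le : ∀ n (k : ℤ), k.natAbs ≤ n → ∀ i, n ≤ i → naf i k = 0 := by
  intro n
  induction n with
  | zero =>
    intro k hk i _
    have hk0 : k = 0 := by omega
    subst hk0
    induction i with
    | zero => simp [naf, nafDigit]
    | succ i ih => simpa [naf, nafDigit] using ih (by omega)
  | succ n ihn =>
    intro k hk i hi
    by_cases h0 : k = 0
    · subst h0
      exact ihn 0 (by simp) i (by omega)
    · obtain ⟨j, rfl⟩ : ∃ j, i = j + 1 := ⟨i - 1, by omega⟩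
      have := nafDigit_natAbs_lt k h0
      exact ihn _ (by omega) j (by omega)

lemma naf_compact (i : ℕ) (k : ℤ) : naf i k * naf (i+1) k = 0 := by
  induction i generalizing k with
  | zero =>
    show nafDigit k * naf 0 ((k - nafDigit k) / 2) = 0
    by_cases h : nafDigit k = 0
    · simp [h]
    · show nafDigit k * nafDigit _ = 0
      rw [nafDigit_step k h, mul_zero]
  | succ i ih => exact ih _

lemma finsum_shift (b : ℕ → ℤ) {N : ℕ} (hb : ∀ i, N ≤ i → b i = 0) :
    ∑ᶠ i, b i * 2 ^ i = b 0 + 2 * ∑ᶠ i, b (i+1) * 2 ^ i := by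
  have h1 : ∑ᶠ i, b i * 2 ^ i = ∑ i ∈ Finset.range (N+1), b i * 2 ^ i := by
    apply finsum_eq_finset_sum_of_support_subset
    intro i hi
    simp only [Function.mem_support] at hi
    simp only [Finset.coe_range, Set.mem_Iio]
    by_contra h
    exact hi (by rw [hb i (by omega)]; ring)
  have h2 : ∑ᶠ i, b (i+1) * 2 ^ i = ∑ i ∈ Finset.range N, b (i+1) * 2 ^ i := by
    apply finsum_eq_finset_sum_of_support_subset
    intro i hi
    simp only [Function.mem_support] at hi
    simp only [Finset.coe_range, Set.mem_Iio]
    by_contra h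
    exact hi (by rw [hb (i+1) (by omega)]; ring)
  rw [h1, h2, Finset.sum_range_succ', Finset.mul_sum]
  simp only [pow_succ, pow_zero, mul_one]
  ring_nf

lemma naf_sum : ∀ n (k : ℤ), k.natAbs ≤ n → ∑ᶠ i, naf i k * 2 ^ i = k := by
  intro n
  induction n with
  | zero =>
    intro k hk
    have hk0 : k = 0 := by omega
    subst hk0
    have : (fun i => naf i (0:ℤ) * 2 ^ i) = fun _ => (0:ℤ) := by
      funext i
      rw [naf_zero_of_le 0 0 (by simp) i (by omega)]; ring
    rw [this, finsum_zero]
  | succ n ihn =>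
    intro k hk
    by_cases h0 : k = 0
    · subst h0; exact ihn 0 (by simp)
    · have hlt := nafDigit_natAbs_lt k h0
      have hv : ∀ i, k.natAbs ≤ i → naf i k = 0 :=
        naf_zero_of_le k.natAbs k le_rfl
      rw [finsum_shift (fun i => naf i k) hv]
      have htail : (fun i => naf (i+1) k) = fun i => naf i ((k - nafDigit k) / 2) := by
        funext i; rfl
      show naf 0 k + 2 * ∑ᶠ i, naf (i+1) k * 2 ^ i = k
      have : ∑ᶠ i, naf (i+1) k * 2 ^ i = (k - nafDigit k) / 2 := by
        simp only [show ∀ i, naf (i+1) k = naf i ((k - nafDigit k) / 2) from fun i => rfl]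
        exact ihn _ (by omega)
      rw [this]
      show nafDigit k + 2 * ((k - nafDigit k) / 2) = k
      exact (nafDigit_spec k).symm

lemma head_eq (b : ℕ → ℤ) {N : ℕ}
    (hd : ∀ i, b i = -1 ∨ b i = 0 ∨ b i = 1)
    (hc : ∀ i, b i * b (i + 1) = 0)
    (hv : ∀ i, N ≤ i → b i = 0) :
    b 0 = nafDigit (∑ᶠ i, b i * 2 ^ i) := by
  set k := ∑ᶠ i, b i * 2 ^ i with hksum
  have hv1 : ∀ i, N ≤ i → b (i+1) = 0 := fun i hi => hv (i+1) (by omega)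
  have hv2 : ∀ i, N ≤ i → b (i+2) = 0 := fun i hi => hv (i+2) (by omega)
  have h1 : k = b 0 + 2 * ∑ᶠ i, b (i+1) * 2 ^ i := finsum_shift b hv
  have h2 : ∑ᶠ i, b (i+1) * 2 ^ i = b 1 + 2 * ∑ᶠ i, b (i+2) * 2 ^ i := by
    have := finsum_shift (fun i => b (i+1)) hv1
    simpa using this
  set s := ∑ᶠ i, b (i+2) * 2 ^ i with hs
  rcases hd 0 with h0 | h0 | h0
  · have hb1 : b 1 = 0 := by have := hc 0; rw [h0] at this; linarith
    rw [h0]; unfold nafDigit; split_ifs <;> omega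
  · rw [h0]; unfold nafDigit; split_ifs <;> omega
  · have hb1 : b 1 = 0 := by have := hc 0; rw [h0] at this; linarith
    rw [h0]; unfold nafDigit; split_ifs <;> omega

lemma naf_uniq : ∀ N (b c : ℕ → ℤ),
    (∀ i, b i = -1 ∨ b i = 0 ∨ b i = 1) → (∀ i, c i = -1 ∨ c i = 0 ∨ c i = 1) →
    (∀ i, b i * b (i + 1) = 0) → (∀ i, c i * c (i + 1) = 0) →
    (∀ i, N ≤ i → b i = 0) → (∀ i, N ≤ i → c i = 0) →
    (∑ᶠ i, b i * 2 ^ i) = (∑ᶠ i, c i * 2 ^ i) → b = c := by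
  intro N
  induction N with
  | zero =>
    intro b c _ _ _ _ hvb hvc _
    funext i
    rw [hvb i (by omega), hvc i (by omega)]
  | succ N ih =>
    intro b c hdb hdc hcb hcc hvb hvc hsum
    have hb0 : b 0 = nafDigit (∑ᶠ i, b i * 2 ^ i) := head_eq b hdb hcb hvb
    have hc0 : c 0 = nafDigit (∑ᶠ i, c i * 2 ^ i) := head_eq c hdc hcc hvc
    have h00 : b 0 = c 0 := by rw [hb0, hc0, hsum]
    have hsb : ∑ᶠ i, b i * 2 ^ i = b 0 + 2 * ∑ᶠ i, b (i+1) * 2 ^ i := finsum_shift b hvb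
    have hsc : ∑ᶠ i, c i * 2 ^ i = c 0 + 2 * ∑ᶠ i, c (i+1) * 2 ^ i := finsum_shift c hvc
    have htails : (∑ᶠ i, b (i+1) * 2 ^ i) = (∑ᶠ i, c (i+1) * 2 ^ i) := by
      rw [hsb, hsc, h00] at hsum; omega
    have := ih (fun i => b (i+1)) (fun i => c (i+1))
      (fun i => hdb (i+1)) (fun i => hdc (i+1))
      (fun i => hcb (i+1)) (fun i => hcc (i+1))
      (fun i hi => hvb (i+1) (by omega)) (fun i hi => hvc (i+1) (by omega))
      htails
    funext i
    cases i with
    | zero => exact h00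
    | succ j => exact congrFun this j

/-- Every integer `k` has exactly one compact signed-digit
representation: a finitely supported sequence `b : ℕ → {−1,0,1}` with
`b i * b (i+1) = 0` for all `i` and `∑ᶠ i, b i * 2 ^ i = k`. -/
theorem exists_unique_compact_signed_digit_representation (k : ℤ) :
    ∃! b : ℕ → ℤ,
      (∀ i, b i = -1 ∨ b i = 0 ∨ b i = 1) ∧
      {i | b i ≠ 0}.Finite ∧
      (∀ i, b i * b (i + 1) = 0) ∧
      ∑ᶠ i, b i * 2 ^ i = k := by
  have hv : ∀ i, k.natAbs ≤ i → naf i k = 0 := naf_zero_of_le k.natAbs k le_rfl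
  refine ⟨fun i => naf i k, ⟨fun i => naf_mem i k, ?_, fun i => naf_compact i k,
    naf_sum k.natAbs k le_rfl⟩, ?_⟩
  · apply Set.Finite.subset (Set.finite_Iio k.natAbs)
    intro i hi
    simp only [Set.mem_setOf_eq] at hi
    simp only [Set.mem_Iio]
    by_contra h
    exact hi (hv i (by omega))
  · rintro c ⟨hdc, hfc, hcc, hsc⟩
    obtain ⟨M, hM⟩ : ∃ M : ℕ, ∀ i, M ≤ i → c i = 0 := by
      obtain ⟨M, hM⟩ := hfc.bddAbove
      exact ⟨M + 1, fun i hi => by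
        by_contra h
        have : i ≤ M := hM h
        omega⟩
    refine naf_uniq (max M k.natAbs) c (fun i => naf i k) hdc (fun i => naf_mem i k)
      hcc (fun i => naf_compact i k)
      (fun i hi => hM i (le_trans (le_max_left _ _) hi))
      (fun i hi => hv i (le_trans (le_max_right _ _) hi)) ?_
    rw [hsc, naf_sum k.natAbs k le_rfl]
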